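/- arXiv:2603.28011 — 3 statements merged into one kernel-verified Lean document; each statement's English description precedes it below -/
import Mathlib

section
/- With notation as in the asymmetric contraction matrix setting, for each fixed x the matrix S(x) = M(x)Df(x) + Df(x)ᵀM(x) + (D_{f(x)}M)(x) + 2cM(x) is negative semidefinite if and only if μ₂(G(x)) ≤ 0, where G(x) = Θ(x)ᵀ[(D_{f(x)}Θ)(x) + Θ(x)(Df(x) + cI)] and M = ΘᵀΘ. -/
open Matrix

lemma symPart_isHermitian {n : ℕ} (A : Matrix (Fin n) (Fin n) ℝ) :
    ((1/2 : ℝ) • (A + Aᵀ)).IsHermitian := by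
  ext i j
  simp [Matrix.conjTranspose_apply, Matrix.transpose_apply, add_comm]
  ring

/-- The ℓ₂-logarithmic norm `μ₂(A) = λ_max((A + Aᵀ)/2)`:
the largest eigenvalue of the symmetric part of `A`. -/
noncomputable def mu2 {n : ℕ} (A : Matrix (Fin n) (Fin n) ℝ) : ℝ :=
  ⨆ i, (symPart_isHermitian A).eigenvalues i

lemma quadform_nonpos_iff_eigenvalues_nonpos {n : ℕ} {A : Matrix (Fin n) (Fin n) ℝ}
    (hA : A.IsHermitian) :
    (∀ v : Fin n → ℝ, v ⬝ᵥ A.mulVec v ≤ 0) ↔ ∀ i, hA.eigenvalues i ≤ 0 := by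
  constructor
  · intro h i
    have := hA.eigenvalues_eq i
    simp only [star_trivial] at this
    rw [this]
    simpa using h _
  · intro h
    have hA' : (-A).IsHermitian := hA.neg
    have heig : ∀ i, 0 ≤ hA'.eigenvalues i := by
      intro i
      have hmem : hA'.eigenvalues i ∈ spectrum ℝ (-A) := hA'.eigenvalues_mem_spectrum_real i
      rw [← spectrum.neg_eq, hA.spectrum_real_eq_range_eigenvalues, Set.mem_neg] at hmem
      obtain ⟨j, hj⟩ := hmem
      have := h j
      linarith
    have hpsd : (-A).PosSemidef := hA'.posSemidef_iff_eigenvalues_nonneg.mpr heig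
    intro v
    have := hpsd.dotProduct_mulVec_nonneg v
    simp only [star_trivial, Matrix.neg_mulVec, dotProduct_neg] at this
    linarith

/-- For fixed x, the contraction LMI matrix S(x) is negative semidefinite iff μ₂(G(x)) ≤ 0. -/
theorem negSemidef_S_iff_mu2_G_nonpos {n : ℕ}
    (Θ : (Fin n → ℝ) → Matrix (Fin n) (Fin n) ℝ)
    (f : (Fin n → ℝ) → (Fin n → ℝ)) (c : ℝ)
    (hΘ : ∀ i j, ContDiff ℝ 1 (fun x => Θ x i j))
    (hf : ∀ i, ContDiff ℝ 1 (fun x => f x i))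
    (Df : (Fin n → ℝ) → Matrix (Fin n) (Fin n) ℝ)
    (hDf : ∀ x i j, Df x i j = fderiv ℝ (fun y => f y i) x (Pi.single j 1))
    (DΘ : (Fin n → ℝ) → Matrix (Fin n) (Fin n) ℝ)
    (hDΘ : ∀ x i j, DΘ x i j = fderiv ℝ (fun y => Θ y i j) x (f x))
    (M : (Fin n → ℝ) → Matrix (Fin n) (Fin n) ℝ)
    (hM : ∀ x, M x = (Θ x)ᵀ * Θ x)
    (DM : (Fin n → ℝ) → Matrix (Fin n) (Fin n) ℝ)
    (hDM : ∀ x i j, DM x i j = fderiv ℝ (fun y => M y i j) x (f x))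
    (G : (Fin n → ℝ) → Matrix (Fin n) (Fin n) ℝ)
    (hG : ∀ x, G x = (Θ x)ᵀ * (DΘ x + Θ x * (Df x + c • (1 : Matrix (Fin n) (Fin n) ℝ))))
    (S : (Fin n → ℝ) → Matrix (Fin n) (Fin n) ℝ)
    (hS : ∀ x, S x = M x * Df x + (Df x)ᵀ * M x + DM x + (2 * c) • M x)
    (x : Fin n → ℝ) :
    (∀ v : Fin n → ℝ, v ⬝ᵥ (S x).mulVec v ≤ 0) ↔ mu2 (G x) ≤ 0 := by
  have hdiff : ∀ k i, DifferentiableAt ℝ (fun y => Θ y k i) x :=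
    fun k i => ((hΘ k i).differentiable one_ne_zero) x
  -- Product rule: DM = Θᵀ DΘ + DΘᵀ Θ
  have hDMeq : DM x = (Θ x)ᵀ * DΘ x + (DΘ x)ᵀ * Θ x := by
    ext i j
    have h1 : (fun y => M y i j) = (fun y => ∑ k, Θ y k i * Θ y k j) := by
      funext y; simp [hM, Matrix.mul_apply, Matrix.transpose_apply]
    rw [hDM, h1, fderiv_fun_sum (A := fun k y => Θ y k i * Θ y k j) (fun k _ => ((hdiff k i).mul (hdiff k j)))]
    simp only [ContinuousLinearMap.sum_apply]
    have h2 : ∀ k, fderiv ℝ (fun y => Θ y k i * Θ y k j) x (f x)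
        = Θ x k j * (fderiv ℝ (fun y => Θ y k i) x (f x))
          + Θ x k i * (fderiv ℝ (fun y => Θ y k j) x (f x)) := by
      intro k
      rw [fderiv_fun_mul (hdiff k i) (hdiff k j)]
      simp only [ContinuousLinearMap.add_apply, ContinuousLinearMap.smul_apply, smul_eq_mul]
      ring
    have h3 : ((Θ x)ᵀ * DΘ x + (DΘ x)ᵀ * Θ x) i j
        = ∑ k, (Θ x k j * (fderiv ℝ (fun y => Θ y k i) x (f x))
          + Θ x k i * (fderiv ℝ (fun y => Θ y k j) x (f x))) := by
      simp only [Matrix.add_apply, Matrix.mul_apply, Matrix.transpose_apply, hDΘ,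
        ← Finset.sum_add_distrib]
      exact Finset.sum_congr rfl fun k _ => by ring
    rw [h3]
    exact Finset.sum_congr rfl fun k _ => h2 k
  -- S x = G x + (G x)ᵀ
  have hSG : S x = G x + (G x)ᵀ := by
    rw [hS, hG, hM, hDMeq]
    simp only [Matrix.transpose_add, Matrix.transpose_mul, Matrix.transpose_smul,
      Matrix.transpose_one, Matrix.mul_add, Matrix.add_mul, Matrix.mul_smul, Matrix.smul_mul,
      Matrix.mul_one, Matrix.transpose_transpose, Matrix.mul_assoc, two_mul, add_smul]
    abel
  have hH := symPart_isHermitian (G x)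
  have key : (∀ v : Fin n → ℝ, v ⬝ᵥ (S x).mulVec v ≤ 0)
      ↔ ∀ v : Fin n → ℝ, v ⬝ᵥ (((1/2 : ℝ) • (G x + (G x)ᵀ)).mulVec v) ≤ 0 := by
    constructor <;> intro h v <;> have hv := h v
    · rw [Matrix.smul_mulVec, dotProduct_smul]
      rw [hSG] at hv
      simp only [smul_eq_mul]
      nlinarith
    · rw [Matrix.smul_mulVec, dotProduct_smul] at hv
      rw [hSG]
      simp only [smul_eq_mul] at hv
      nlinarith
  rw [key, quadform_nonpos_iff_eigenvalues_nonpos hH, mu2]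
  rcases Nat.eq_zero_or_pos n with hn | hn
  · subst hn
    constructor
    · intro _
      simp [Real.iSup_of_isEmpty]
    · intro _ i
      exact absurd i.2 (by omega)
  · have : Nonempty (Fin n) := ⟨⟨0, hn⟩⟩
    constructor
    · intro h
      exact ciSup_le h
    · intro h i
      exact le_trans (le_ciSup (Set.Finite.bddAbove (Set.finite_range _)) i) h
end

section
/- Let [A] = {A ∈ ℝ^{n×n} : A̲ ≤ A ≤ Ā entrywise} be an interval matrix with center A^c = (A̲+Ā)/2 and radius A^Δ = (Ā−A̲)/2. Then max_{A ∈ [A]} μ₂(A) = max { μ₂(A^c + diag(s) A^Δ diag(s)) : s ∈ {−1,+1}ⁿ }. -/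
open Matrix

lemma quad_transpose {n : ℕ} (A : Matrix (Fin n) (Fin n) ℝ) (v : Fin n → ℝ) :
    v ⬝ᵥ Aᵀ *ᵥ v = v ⬝ᵥ A *ᵥ v := by
  rw [Matrix.mulVec_transpose, dotProduct_comm, ← Matrix.dotProduct_mulVec]

lemma quad_symPart {n : ℕ} (A : Matrix (Fin n) (Fin n) ℝ) (v : Fin n → ℝ) :
    v ⬝ᵥ ((1/2 : ℝ) • (A + Aᵀ)) *ᵥ v = v ⬝ᵥ A *ᵥ v := by
  rw [Matrix.smul_mulVec, Matrix.add_mulVec, dotProduct_smul, dotProduct_add,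
    quad_transpose]
  simp; ring

lemma rayleigh_le_mu2 {n : ℕ} (A : Matrix (Fin n) (Fin n) ℝ) (v : Fin n → ℝ)
    (hv : v ⬝ᵥ v = 1) : v ⬝ᵥ A *ᵥ v ≤ mu2 A := by
  set S := (1/2 : ℝ) • (A + Aᵀ) with hSdef
  have hS := symPart_isHermitian A
  set U : Matrix (Fin n) (Fin n) ℝ := (hS.eigenvectorUnitary : Matrix (Fin n) (Fin n) ℝ)
    with hUdef
  have hstar : star U = Uᵀ := by
    ext i j
    simp [Matrix.star_apply, Matrix.transpose_apply]
  have hUU : U * Uᵀ = 1 := by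
    have := (Matrix.mem_unitaryGroup_iff).mp hS.eigenvectorUnitary.2
    rwa [hstar] at this
  have hspec : (1/2 : ℝ) • (A + Aᵀ) = U * Matrix.diagonal hS.eigenvalues * Uᵀ := by
    have := hS.spectral_theorem
    rw [Unitary.conjStarAlgAut_apply, ← hUdef] at this
    rwa [hstar, RCLike.ofReal_real_eq_id, Function.id_comp] at this
  set w : Fin n → ℝ := Uᵀ *ᵥ v with hwdef
  have hq : v ⬝ᵥ A *ᵥ v = w ⬝ᵥ (Matrix.diagonal hS.eigenvalues) *ᵥ w := by
    rw [← quad_symPart A v]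
    conv_lhs => rw [hspec]
    rw [← Matrix.mulVec_mulVec, ← Matrix.mulVec_mulVec]
    rw [Matrix.dotProduct_mulVec v U, ← Matrix.mulVec_transpose]
  have hw1 : w ⬝ᵥ w = 1 := by
    have : w ⬝ᵥ w = v ⬝ᵥ (U * Uᵀ) *ᵥ v := by
      rw [hwdef, ← Matrix.mulVec_mulVec, Matrix.dotProduct_mulVec v U,
        ← Matrix.mulVec_transpose]
    rw [this, hUU, Matrix.one_mulVec, hv]
  have hwn : ∀ i, 0 ≤ w i * w i := fun i => mul_self_nonneg _
  have hne : Nonempty (Fin n) := by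
    by_contra hcon
    simp only [not_nonempty_iff] at hcon
    rw [dotProduct, Finset.sum_of_isEmpty] at hv
    exact one_ne_zero hv.symm
  have hbdd : BddAbove (Set.range hS.eigenvalues) := Set.Finite.bddAbove (Set.finite_range _)
  have hle : ∀ i, hS.eigenvalues i ≤ mu2 A := fun i => le_ciSup hbdd i
  calc v ⬝ᵥ A *ᵥ v = ∑ i, w i * (hS.eigenvalues i * w i) := by
        rw [hq]; simp [dotProduct, Matrix.mulVec_diagonal]
    _ ≤ ∑ i, w i * (mu2 A * w i) := by
        apply Finset.sum_le_sum
        intro i _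
        have : w i * (hS.eigenvalues i * w i) = hS.eigenvalues i * (w i * w i) := by ring
        rw [this]
        have h2 : w i * (mu2 A * w i) = mu2 A * (w i * w i) := by ring
        rw [h2]
        exact mul_le_mul_of_nonneg_right (hle i) (hwn i)
    _ = mu2 A * (w ⬝ᵥ w) := by rw [dotProduct, Finset.mul_sum]; apply Finset.sum_congr rfl; intros; ring
    _ = mu2 A := by rw [hw1, mul_one]

lemma exists_unit_rayleigh {n : ℕ} (hn : 0 < n) (A : Matrix (Fin n) (Fin n) ℝ) :
    ∃ v : Fin n → ℝ, v ⬝ᵥ v = 1 ∧ v ⬝ᵥ A *ᵥ v = mu2 A := by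
  have hS := symPart_isHermitian A
  have hne : Nonempty (Fin n) := ⟨⟨0, hn⟩⟩
  obtain ⟨i0, hi0⟩ := Finite.exists_max hS.eigenvalues
  have hbdd : BddAbove (Set.range hS.eigenvalues) := Set.Finite.bddAbove (Set.finite_range _)
  have hmax : mu2 A = hS.eigenvalues i0 :=
    le_antisymm (ciSup_le hi0) (le_ciSup hbdd i0)
  set v : Fin n → ℝ := ⇑(hS.eigenvectorBasis i0) with hvdef
  have hortho : (inner ℝ (hS.eigenvectorBasis i0) (hS.eigenvectorBasis i0) : ℝ) = 1 := by
    simpa using orthonormal_iff_ite.mp hS.eigenvectorBasis.orthonormal i0 i0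
  have hinner : v ⬝ᵥ v = 1 := by
    rw [← hortho]
    simp only [hvdef, PiLp.inner_apply, dotProduct, RCLike.inner_apply, conj_trivial]
  refine ⟨v, hinner, ?_⟩
  have hmulv : ((1/2 : ℝ) • (A + Aᵀ)) *ᵥ v = hS.eigenvalues i0 • v :=
    hS.mulVec_eigenvectorBasis i0
  rw [← quad_symPart A v, hmulv, dotProduct_smul, smul_eq_mul, hinner, mul_one, hmax]

lemma mu2_of_zero {A : Matrix (Fin 0) (Fin 0) ℝ} : mu2 A = 0 := by
  simp [mu2]

/-- Rohn's corner-check theorem for the ℓ₂-logarithmic norm over an interval matrix: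
the maximum of μ₂ over the interval matrix [A̲, Ā] is attained and equals the maximum of
μ₂ over the 2ⁿ sign-symmetric corner matrices A^c + diag(s) A^Δ diag(s). -/
theorem max_mu2_interval_eq_corner_max {n : ℕ}
    (Alo Ahi : Matrix (Fin n) (Fin n) ℝ) (h : ∀ i j, Alo i j ≤ Ahi i j)
    (Ac AΔ : Matrix (Fin n) (Fin n) ℝ)
    (hAc : Ac = (1/2 : ℝ) • (Alo + Ahi)) (hAΔ : AΔ = (1/2 : ℝ) • (Ahi - Alo)) :
    IsGreatest {r : ℝ | ∃ A : Matrix (Fin n) (Fin n) ℝ,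
        (∀ i j, Alo i j ≤ A i j ∧ A i j ≤ Ahi i j) ∧ r = mu2 A}
      (sSup {r : ℝ | ∃ s : Fin n → ℝ, (∀ i, s i = 1 ∨ s i = -1) ∧
        r = mu2 (Ac + Matrix.diagonal s * AΔ * Matrix.diagonal s)}) := by
  have hAcij : ∀ i j, Ac i j = (Alo i j + Ahi i j) / 2 := by
    intro i j; rw [hAc]; simp [Matrix.smul_apply, Matrix.add_apply]; ring
  have hAΔij : ∀ i j, AΔ i j = (Ahi i j - Alo i j) / 2 := by
    intro i j; rw [hAΔ]; simp [Matrix.smul_apply, Matrix.sub_apply]; ring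
  have hAΔnn : ∀ i j, 0 ≤ AΔ i j := by
    intro i j; rw [hAΔij]; linarith [h i j]
  -- corner entries
  have hCij : ∀ (s : Fin n → ℝ) i j,
      (Ac + Matrix.diagonal s * AΔ * Matrix.diagonal s) i j
        = Ac i j + s i * AΔ i j * s j := by
    intro s i j
    simp only [Matrix.add_apply, Matrix.mul_diagonal, Matrix.diagonal_mul]
  -- corner matrices are in the box
  have hCbox : ∀ (s : Fin n → ℝ), (∀ i, s i = 1 ∨ s i = -1) →
      ∀ i j, Alo i j ≤ (Ac + Matrix.diagonal s * AΔ * Matrix.diagonal s) i j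
        ∧ (Ac + Matrix.diagonal s * AΔ * Matrix.diagonal s) i j ≤ Ahi i j := by
    intro s hs i j
    rw [hCij]
    have h1 := hAcij i j; have h2 := hAΔij i j; have h3 := h i j
    rcases hs i with hi | hi <;> rcases hs j with hj | hj <;>
      rw [hi, hj] <;> constructor <;> nlinarith
  set corner : Set ℝ := {r : ℝ | ∃ s : Fin n → ℝ, (∀ i, s i = 1 ∨ s i = -1) ∧
      r = mu2 (Ac + Matrix.diagonal s * AΔ * Matrix.diagonal s)} with hcorner
  -- corner set is finite and nonempty
  have hsignfin : ({s : Fin n → ℝ | ∀ i, s i = 1 ∨ s i = -1}).Finite := by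
    apply Set.Finite.subset (Set.Finite.pi (fun _ : Fin n => (Set.finite_singleton (1:ℝ)).insert (-1)))
    intro s hs
    rw [Set.mem_pi]
    intro i _
    rcases hs i with h' | h' <;> simp [h']
  have hcfin : corner.Finite := by
    have : corner = (fun s : Fin n → ℝ =>
        mu2 (Ac + Matrix.diagonal s * AΔ * Matrix.diagonal s)) ''
        {s : Fin n → ℝ | ∀ i, s i = 1 ∨ s i = -1} := by
      ext r
      constructor
      · rintro ⟨s, hs, rfl⟩; exact ⟨s, hs, rfl⟩
      · rintro ⟨s, hs, rfl⟩; exact ⟨s, hs, rfl⟩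
    rw [this]
    exact hsignfin.image _
  have hcne : corner.Nonempty := ⟨_, ⟨fun _ => 1, fun i => Or.inl rfl, rfl⟩⟩
  have hbdd : BddAbove corner := hcfin.bddAbove
  constructor
  · -- membership: sSup corner is attained by some corner matrix, which lies in the box
    obtain ⟨s, hs, hval⟩ := hcne.csSup_mem hcfin
    exact ⟨Ac + Matrix.diagonal s * AΔ * Matrix.diagonal s, hCbox s hs, hval⟩
  · -- upper bound
    rintro r ⟨A, hAbox, rfl⟩
    rcases Nat.eq_zero_or_pos n with hn | hn
    · subst hn
      rw [mu2_of_zero]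
      obtain ⟨r', hr'⟩ := hcne
      obtain ⟨s, hs, rfl⟩ := hr'
      calc (0:ℝ) = mu2 (Ac + Matrix.diagonal s * AΔ * Matrix.diagonal s) := mu2_of_zero.symm
        _ ≤ sSup corner := le_csSup hbdd ⟨s, hs, rfl⟩
    · obtain ⟨v, hv1, hv2⟩ := exists_unit_rayleigh hn A
      set s : Fin n → ℝ := fun i => if 0 ≤ v i then 1 else -1 with hsdef
      have hs : ∀ i, s i = 1 ∨ s i = -1 := by
        intro i; by_cases h' : 0 ≤ v i <;> simp [hsdef, h']
      have hsv : ∀ i, s i * v i = |v i| := by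
        intro i
        by_cases h' : 0 ≤ v i
        · simp [hsdef, h', abs_of_nonneg h']
        · simp [hsdef, h', abs_of_neg (lt_of_not_ge h')]
      set C := Ac + Matrix.diagonal s * AΔ * Matrix.diagonal s with hCdef
      have hquad : ∀ M : Matrix (Fin n) (Fin n) ℝ,
          v ⬝ᵥ M *ᵥ v = ∑ i, ∑ j, v i * (M i j * v j) := by
        intro M
        simp [dotProduct, Matrix.mulVec, Finset.mul_sum]
      have hkey : ∀ (d e a b : ℝ), |d| ≤ e → d * (a * b) ≤ e * (|a| * |b|) := by
        intro d e a b hd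
        calc d * (a * b) ≤ |d * (a * b)| := le_abs_self _
          _ = |d| * (|a| * |b|) := by rw [abs_mul, abs_mul]
          _ ≤ e * (|a| * |b|) := mul_le_mul_of_nonneg_right hd (by positivity)
      have hstep : v ⬝ᵥ A *ᵥ v ≤ v ⬝ᵥ C *ᵥ v := by
        rw [hquad A, hquad C]
        apply Finset.sum_le_sum
        intro i _
        apply Finset.sum_le_sum
        intro j _
        have habs : |A i j - Ac i j| ≤ AΔ i j := by
          rw [abs_le]
          have h1 := hAcij i j; have h2 := hAΔij i j
          have h3 := (hAbox i j).1; have h4 := (hAbox i j).2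
          constructor <;> [skip; skip] <;> rw [h1, h2] <;> linarith
        have hC' : v i * (C i j * v j)
            = v i * (Ac i j * v j) + AΔ i j * ((s i * v i) * (s j * v j)) := by
          rw [hCdef, hCij]; ring
        rw [hC', hsv i, hsv j]
        have hk := hkey (A i j - Ac i j) (AΔ i j) (v i) (v j) habs
        have hring : v i * (A i j * v j) - v i * (Ac i j * v j)
            = (A i j - Ac i j) * (v i * v j) := by ring
        have habsmul : |v i| * |v j| = |v i| * |v j| := rfl
        nlinarith [hk, hring]
      have hmem : mu2 C ∈ corner := ⟨s, hs, rfl⟩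
      calc mu2 A = v ⬝ᵥ A *ᵥ v := hv2.symm
        _ ≤ v ⬝ᵥ C *ᵥ v := hstep
        _ ≤ mu2 C := rayleigh_le_mu2 C v hv1
        _ ≤ sSup corner := le_csSup hbdd hmem
end

section
/- Let [M] be an interval matrix with center M^c, radius M^Δ ≥ 0 entrywise. Suppose â := min_{s ∈ {−1,+1}ⁿ} (−μ₂(−M^c + diag(s)M^Δdiag(s))) ≥ a and b̂ := max_{s ∈ {−1,+1}ⁿ} μ₂(M^c + diag(s)M^Δdiag(s)) ≤ b. Then every M ∈ [M] satisfies a·I ⪯ (M+Mᵀ)/2 ⪯ b·I (in the positive semidefinite order). -/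
open Matrix

-- step 1: eigenvalues ≤ b ⇒ b•1 - A PSD
lemma aux_psd {n : ℕ} {A : Matrix (Fin n) (Fin n) ℝ} (hA : A.IsHermitian) {b : ℝ}
    (h : ∀ i, hA.eigenvalues i ≤ b) :
    (b • (1 : Matrix (Fin n) (Fin n) ℝ) - A).PosSemidef := by
  have hU := hA.spectral_theorem
  have h1 : b • (1 : Matrix (Fin n) (Fin n) ℝ) - A
      = (hA.eigenvectorUnitary : Matrix (Fin n) (Fin n) ℝ) *
        Matrix.diagonal (fun i => b - hA.eigenvalues i) *
        (hA.eigenvectorUnitary : Matrix (Fin n) (Fin n) ℝ)ᴴ := by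
    set U : Matrix (Fin n) (Fin n) ℝ := (hA.eigenvectorUnitary : Matrix (Fin n) (Fin n) ℝ)
    have hUU : U * Uᴴ = 1 := by
      rw [← Matrix.star_eq_conjTranspose]
      exact Matrix.mem_unitaryGroup_iff.mp hA.eigenvectorUnitary.2
    have hd : Matrix.diagonal (fun i => b - hA.eigenvalues i)
        = b • (1 : Matrix (Fin n) (Fin n) ℝ) - Matrix.diagonal hA.eigenvalues := by
      ext i j
      by_cases h : i = j <;> simp [Matrix.diagonal_apply, Matrix.one_apply, h]
    have hA' : U * Matrix.diagonal hA.eigenvalues * Uᴴ = A := by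
      conv_rhs => rw [hU]
      rw [← Matrix.star_eq_conjTranspose]
      rfl
    rw [hd, Matrix.mul_sub, Matrix.sub_mul, hA', mul_smul_comm, smul_mul_assoc,
      mul_one, hUU]
  rw [h1]
  exact (Matrix.PosSemidef.diagonal (fun i => by simpa using h i)).mul_mul_conjTranspose_same _

-- step 2: quadratic form ≤ mu2
lemma sym_quad {n : ℕ} (A : Matrix (Fin n) (Fin n) ℝ) (x : Fin n → ℝ) :
    x ⬝ᵥ (((1/2 : ℝ) • (A + Aᵀ)) *ᵥ x) = x ⬝ᵥ (A *ᵥ x) := by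
  have ht : x ⬝ᵥ (Aᵀ *ᵥ x) = x ⬝ᵥ (A *ᵥ x) := by
    rw [Matrix.dotProduct_mulVec, Matrix.vecMul_transpose, dotProduct_comm]
  rw [Matrix.smul_mulVec, dotProduct_smul, Matrix.add_mulVec,
    dotProduct_add, ht, smul_eq_mul]
  ring

lemma mu2_quad {n : ℕ} (A : Matrix (Fin n) (Fin n) ℝ) (x : Fin n → ℝ) :
    x ⬝ᵥ (A *ᵥ x) ≤ mu2 A * (x ⬝ᵥ x) := by
  have hS := symPart_isHermitian A
  have heig : ∀ i, hS.eigenvalues i ≤ mu2 A := fun i =>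
    le_ciSup (Set.Finite.bddAbove (Set.finite_range _)) i
  have hpsd := aux_psd hS heig
  have := hpsd.dotProduct_mulVec_nonneg x
  simp only [star_trivial, Matrix.sub_mulVec, dotProduct_sub,
    Matrix.smul_mulVec, Matrix.one_mulVec, dotProduct_smul, smul_eq_mul,
    Matrix.add_mulVec, dotProduct_add] at this
  have h2 := sym_quad A x
  simp only [Matrix.smul_mulVec, dotProduct_smul, Matrix.add_mulVec,
    dotProduct_add, smul_eq_mul] at h2
  linarith

lemma interval_quad {n : ℕ} (N C Δ : Matrix (Fin n) (Fin n) ℝ)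
    (hΔ : ∀ i j, 0 ≤ Δ i j) (hN : ∀ i j, |N i j - C i j| ≤ Δ i j)
    (x s : Fin n → ℝ) (hsx : ∀ i, s i * x i = |x i|) :
    x ⬝ᵥ (N *ᵥ x) ≤ x ⬝ᵥ ((C + Matrix.diagonal s * Δ * Matrix.diagonal s) *ᵥ x) := by
  simp only [dotProduct, Matrix.mulVec, dotProduct, Finset.mul_sum]
  refine Finset.sum_le_sum fun i _ => Finset.sum_le_sum fun j _ => ?_
  have hent : (C + Matrix.diagonal s * Δ * Matrix.diagonal s) i j
      = C i j + s i * Δ i j * s j := by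
    simp [Matrix.add_apply, Matrix.mul_apply, Matrix.diagonal_apply, Finset.sum_ite_eq,
      Finset.sum_ite_eq']
  rw [hent]
  have key : (N i j - C i j) * (x i * x j) ≤ Δ i j * (|x i| * |x j|) := by
    calc (N i j - C i j) * (x i * x j) ≤ |(N i j - C i j) * (x i * x j)| := le_abs_self _
    _ = |N i j - C i j| * (|x i| * |x j|) := by rw [abs_mul, abs_mul]
    _ ≤ Δ i j * (|x i| * |x j|) :=
        mul_le_mul_of_nonneg_right (hN i j) (by positivity)
  have hx : s i * Δ i j * s j * x j * x i = Δ i j * (|x i| * |x j|) := by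
    rw [← hsx i, ← hsx j]; ring
  nlinarith [key, hx]

/-- If all corner checks certify a ≤ λ_min and λ_max ≤ b, then every matrix in the interval
matrix [M^c − M^Δ, M^c + M^Δ] satisfies a·I ⪯ (M+Mᵀ)/2 ⪯ b·I in the Loewner order. -/
theorem corner_checks_uniform_definiteness {n : ℕ}
    (Mc MΔ : Matrix (Fin n) (Fin n) ℝ) (hMΔ : ∀ i j, 0 ≤ MΔ i j) (a b : ℝ)
    (ha : ∀ s : Fin n → ℝ, (∀ i, s i = 1 ∨ s i = -1) →
      a ≤ -mu2 (-Mc + Matrix.diagonal s * MΔ * Matrix.diagonal s))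
    (hb : ∀ s : Fin n → ℝ, (∀ i, s i = 1 ∨ s i = -1) →
      mu2 (Mc + Matrix.diagonal s * MΔ * Matrix.diagonal s) ≤ b) :
    ∀ M : Matrix (Fin n) (Fin n) ℝ, (∀ i j, |M i j - Mc i j| ≤ MΔ i j) →
      ((1/2 : ℝ) • (M + Mᵀ) - a • (1 : Matrix (Fin n) (Fin n) ℝ)).PosSemidef ∧
      (b • (1 : Matrix (Fin n) (Fin n) ℝ) - (1/2 : ℝ) • (M + Mᵀ)).PosSemidef := by
  intro M hM
  have hSherm := symPart_isHermitian M
  have hasm : (a • (1 : Matrix (Fin n) (Fin n) ℝ)).IsHermitian := by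
    ext i j; simp [Matrix.one_apply, Matrix.conjTranspose_apply]; split <;> simp_all [eq_comm]
  have hbsm : (b • (1 : Matrix (Fin n) (Fin n) ℝ)).IsHermitian := by
    ext i j; simp [Matrix.one_apply, Matrix.conjTranspose_apply]; split <;> simp_all [eq_comm]
  -- quadratic form bounds
  have key : ∀ x : Fin n → ℝ,
      a * (x ⬝ᵥ x) ≤ x ⬝ᵥ (M *ᵥ x) ∧ x ⬝ᵥ (M *ᵥ x) ≤ b * (x ⬝ᵥ x) := by
    intro x
    set s : Fin n → ℝ := fun i => if 0 ≤ x i then 1 else -1 with hs_def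
    have hs : ∀ i, s i = 1 ∨ s i = -1 := fun i => by
      by_cases h : 0 ≤ x i <;> simp [hs_def, h]
    have hsx : ∀ i, s i * x i = |x i| := fun i => by
      by_cases h : 0 ≤ x i
      · simp [hs_def, h, abs_of_nonneg h]
      · simp [hs_def, h, abs_of_neg (lt_of_not_ge h)]
    constructor
    · have hq := interval_quad (-M) (-Mc) MΔ hMΔ
        (fun i j => by
          have h := hM i j
          rw [abs_sub_comm] at h
          simpa [Matrix.neg_apply, sub_eq_add_neg, add_comm] using h) x s hsx
      have hmu := mu2_quad (-Mc + Matrix.diagonal s * MΔ * Matrix.diagonal s) x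
      have hxx : (0:ℝ) ≤ x ⬝ᵥ x := Finset.sum_nonneg fun i _ => mul_self_nonneg _
      have hng : x ⬝ᵥ ((-M) *ᵥ x) = -(x ⬝ᵥ (M *ᵥ x)) := by
        simp [Matrix.neg_mulVec, dotProduct_neg]
      have hab := ha s hs
      nlinarith [mul_le_mul_of_nonneg_right hab hxx]
    · have hq := interval_quad M Mc MΔ hMΔ hM x s hsx
      have hmu := mu2_quad (Mc + Matrix.diagonal s * MΔ * Matrix.diagonal s) x
      have hxx : (0:ℝ) ≤ x ⬝ᵥ x := Finset.sum_nonneg fun i _ => mul_self_nonneg _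
      have hab := hb s hs
      nlinarith [mul_le_mul_of_nonneg_right hab hxx]
  constructor
  · refine Matrix.PosSemidef.of_dotProduct_mulVec_nonneg (hSherm.sub hasm) fun x => ?_
    have h1 := (key x).1
    simp only [star_trivial, Matrix.sub_mulVec, dotProduct_sub,
      Matrix.smul_mulVec, Matrix.one_mulVec, dotProduct_smul, smul_eq_mul]
    have h2 := sym_quad M x
    simp only [Matrix.smul_mulVec, dotProduct_smul, Matrix.add_mulVec,
      dotProduct_add, smul_eq_mul] at h2 ⊢
    linarith
  · refine Matrix.PosSemidef.of_dotProduct_mulVec_nonneg (hbsm.sub hSherm) fun x => ?_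
    have h1 := (key x).2
    simp only [star_trivial, Matrix.sub_mulVec, dotProduct_sub,
      Matrix.smul_mulVec, Matrix.one_mulVec, dotProduct_smul, smul_eq_mul]
    have h2 := sym_quad M x
    simp only [Matrix.smul_mulVec, dotProduct_smul, Matrix.add_mulVec,
      dotProduct_add, smul_eq_mul] at h2 ⊢
    linarith
end
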